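/- Let T be a complete binary tree whose 2^b leaves carry values v_0,...,v_{2^b-1} in a commutative idempotent monoid with max, and whose internal nodes each carry the max of their two children's labels. Then for any leaf index p, the search procedure that starts at the root and descends toward leaf p, accumulating the label of the left child whenever it moves to the right child, and finally accumulating the label of the node at which it stops (the first node on the path whose rightmost descendant is ≤ p), returns max_{0 ≤ j ≤ p} v_j. -/

import Mathlib

/-- The `getBestScore` descent in a complete binary tree of depth `h` whose node
rooted at leaves `[lo, lo + 2^h)` carries, at each internal node, the max of its
children's labels (hence the max of the leaf values below it, `(Finset.Ico …).sup v`).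
The procedure descends toward leaf `p`: it stops at the first node whose rightmost
descendant is `≤ p` and returns its label; otherwise it moves to the left child when
the rightmost leaf under the left child is `≥ p`, and otherwise accumulates the left
child's label and moves to the right child. -/
def getBest (v : ℕ → ℕ) : ℕ → ℕ → ℕ → ℕ
  | 0, lo, _ => v lo
  | h + 1, lo, p =>
    if lo + 2 ^ (h + 1) - 1 ≤ p then (Finset.Ico lo (lo + 2 ^ (h + 1))).sup v
    else if p ≤ lo + 2 ^ h - 1 then getBest v h lo p
    else max ((Finset.Ico lo (lo + 2 ^ h)).sup v) (getBest v h (lo + 2 ^ h) p)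

/-- For a complete binary tree with `2^b` leaves carrying values `v 0, …, v (2^b - 1)`
and internal nodes labelled by the max of their children, the `getBestScore`
procedure started at the root returns `max_{0 ≤ j ≤ p} v j`. -/
lemma getBest_eq_Ico (v : ℕ → ℕ) : ∀ (h lo p : ℕ), lo ≤ p → p < lo + 2 ^ h →
    getBest v h lo p = (Finset.Ico lo (p + 1)).sup v := by
  intro h
  induction h with
  | zero =>
    intro lo p h1 h2
    have : p = lo := by omega
    subst this
    simp [getBest]
  | succ h ih =>
    intro lo p h1 h2
    have hpos : 0 < 2 ^ h := Nat.pow_pos (by norm_num)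
    rw [getBest]
    split_ifs with hc1 hc2
    · have : p + 1 = lo + 2 ^ (h + 1) := by omega
      rw [this]
    · exact ih lo p h1 (by omega)
    · rw [ih (lo + 2 ^ h) p (by omega) (by rw [pow_succ] at h2; omega)]
      rw [← Finset.sup_union, Finset.Ico_union_Ico_eq_Ico (by omega) (by omega)]

theorem getBest_eq_prefix_max (b : ℕ) (v : ℕ → ℕ) (p : ℕ) (hp : p < 2 ^ b) :
    getBest v b 0 p = (Finset.range (p + 1)).sup v := by
  rw [getBest_eq_Ico v b 0 p (Nat.zero_le p) (by omega), ← Finset.range_eq_Ico]
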